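/- Let N > 0 and let φ_n, φ belong to S^N, and assume that for every continuous compactly supported function f : [0,T] × Z → ℝ one has ∫₀^T ∫_Z f(s,z) φ_n(s,z) ν(dz) ds → ∫₀^T ∫_Z f(s,z) φ(s,z) ν(dz) ds as n → ∞. Then ∫₀^T ∫_Z h(z) (φ_n(s,z) − 1) ν(dz) ds converges, as n → ∞, to ∫₀^T ∫_Z h(z) (φ(s,z) − 1) ν(dz) ds. -/

import Mathlib

open MeasureTheory Set Filter Topology


open Real

lemma amgm_div {δ x y : ℝ} (hδ : 0 < δ) : x * y ≤ δ * x^2 + y^2/(4*δ) := by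
  have hQ : y^2 = 4*δ*(y^2/(4*δ)) := by field_simp
  nlinarith [sq_nonneg (2*δ*x - y), hδ, hQ]

lemma log_ge_one_sub_inv {a : ℝ} (ha : 0 < a) : 1 - 1/a ≤ Real.log a := by
  have h := Real.log_le_sub_one_of_pos (x := 1/a) (by positivity)
  rw [Real.log_div one_ne_zero (ne_of_gt ha), Real.log_one] at h
  have : 0 - Real.log a ≤ 1/a - 1 := by linarith
  linarith

lemma mul_log_ge {a : ℝ} (ha : 0 < a) : a - 1 ≤ a * Real.log a := by
  have h := log_ge_one_sub_inv ha
  have := mul_le_mul_of_nonneg_left h (le_of_lt ha)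
  have ha' : a * (1/a) = 1 := by field_simp
  nlinarith

lemma ell_nonneg {a : ℝ} (ha : 0 ≤ a) : 0 ≤ a * Real.log a - a + 1 := by
  rcases eq_or_lt_of_le ha with rfl | ha
  · simp
  · have := mul_log_ge ha; linarith

lemma sqrt_sub_one_sq_le {a : ℝ} (ha : 0 ≤ a) :
    (Real.sqrt a - 1)^2 ≤ a * Real.log a - a + 1 := by
  rcases eq_or_lt_of_le ha with rfl | ha
  · simp
  · set t := Real.sqrt a with ht
    have ht0 : 0 < t := Real.sqrt_pos.mpr ha
    have hta : t^2 = a := Real.sq_sqrt ha.le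
    have hlog : Real.log a = 2 * Real.log t := by
      rw [← hta]; rw [Real.log_pow]; push_cast; ring
    have h1 : t - 1 ≤ t * Real.log t := mul_log_ge ht0
    have h2 : 2 * t * (t - 1) ≤ 2 * t * (t * Real.log t) := by nlinarith
    have h3 : a * Real.log a = 2 * t * (t * Real.log t) := by
      rw [hlog, ← hta]; ring
    nlinarith [hta, h3, h2]

lemma young_ineq {a b : ℝ} (ha : 0 ≤ a) :
    a * b ≤ (a * Real.log a - a + 1) + (Real.exp b - 1) := by
  rcases eq_or_lt_of_le ha with rfl | ha
  · simp; positivity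
  · have h := Real.add_one_le_exp (b - Real.log a)
    have he : Real.exp (b - Real.log a) = Real.exp b / a := by
      rw [Real.exp_sub, Real.exp_log ha]
    rw [he] at h
    have := mul_le_mul_of_nonneg_left h (le_of_lt ha)
    have ha' : a * (Real.exp b / a) = Real.exp b := by field_simp
    nlinarith

lemma key_pointwise {δ M a b : ℝ} (hδ : 0 < δ) (hM : 0 ≤ M) (ha : 0 ≤ a)
    (hb0 : 0 ≤ b) (hbM : b ≤ M) :
    b * |a - 1| ≤ δ * (a * Real.log a - a + 1)
      + (Real.exp ((M/δ + 1)/2) + 1)^2 / (4*δ) * b^2 := by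
  set C := (Real.exp ((M/δ + 1)/2) + 1)^2 / (4*δ) with hC
  by_cases hcase : a ≤ Real.exp (M/δ + 1)
  · -- small a : quadratic bound
    set t := Real.sqrt a with ht
    have hta : t^2 = a := Real.sq_sqrt ha
    have ht0 : 0 ≤ t := Real.sqrt_nonneg a
    have htE : t ≤ Real.exp ((M/δ + 1)/2) := by
      have hsqe : (Real.exp ((M/δ+1)/2))^2 = Real.exp (M/δ + 1) := by
        rw [sq, ← Real.exp_add]; ring_nf
      have : a ≤ (Real.exp ((M/δ+1)/2))^2 := by rw [hsqe]; exact hcase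
      calc t = Real.sqrt a := ht
        _ ≤ Real.sqrt ((Real.exp ((M/δ+1)/2))^2) := Real.sqrt_le_sqrt this
        _ = Real.exp ((M/δ+1)/2) := Real.sqrt_sq (by positivity)
    have habs : |a - 1| = |t - 1| * (t + 1) := by
      have : a - 1 = (t - 1) * (t + 1) := by nlinarith
      rw [this, abs_mul, abs_of_nonneg (by linarith : (0:ℝ) ≤ t + 1)]
    have hE : t + 1 ≤ Real.exp ((M/δ+1)/2) + 1 := by linarith
    set E := Real.exp ((M/δ+1)/2) + 1 with hEdef
    have hE0 : 0 < E := by positivity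
    have step1 : b * |a-1| ≤ (E * b) * |t - 1| := by
      rw [habs]
      have : b * (|t-1| * (t+1)) = (b * (t+1)) * |t-1| := by ring
      rw [this]
      apply mul_le_mul_of_nonneg_right _ (abs_nonneg _)
      nlinarith
    have amgm : (E * b) * |t-1| ≤ δ * (t-1)^2 + (E*b)^2/(4*δ) := by
      have := amgm_div (x := |t-1|) (y := E*b) hδ
      calc (E*b) * |t-1| = |t-1| * (E*b) := by ring
        _ ≤ δ * |t-1|^2 + (E*b)^2/(4*δ) := this
        _ = δ * (t-1)^2 + (E*b)^2/(4*δ) := by rw [sq_abs]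
    have hsq : (t-1)^2 ≤ a * Real.log a - a + 1 := sqrt_sub_one_sq_le ha
    have : b * |a-1| ≤ δ * (a * Real.log a - a + 1) + (E*b)^2/(4*δ) := by
      calc b * |a-1| ≤ (E * b) * |t - 1| := step1
        _ ≤ δ * (t-1)^2 + (E*b)^2/(4*δ) := amgm
        _ ≤ δ * (a * Real.log a - a + 1) + (E*b)^2/(4*δ) := by
            have := mul_le_mul_of_nonneg_left hsq hδ.le; linarith
    calc b * |a-1| ≤ δ * (a * Real.log a - a + 1) + (E*b)^2/(4*δ) := this
      _ = δ * (a * Real.log a - a + 1) + C * b^2 := by rw [hC]; ring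
  · -- large a
    push_neg at hcase
    have ha1 : 1 ≤ a := le_trans (Real.one_le_exp (by positivity)) hcase.le
    have hlog : M/δ + 1 ≤ Real.log a := by
      rw [← Real.log_exp (M/δ + 1)]
      exact Real.log_le_log (Real.exp_pos _) hcase.le
    have habs : |a - 1| = a - 1 := abs_of_nonneg (by linarith)
    have ha0 : 0 < a := by linarith
    have h1 : a * (M/δ + 1) ≤ a * Real.log a := by nlinarith
    have h2 : M * a ≤ δ * (a * Real.log a - a + 1) := by
      have he : δ * (a * (M/δ+1)) = M*a + δ*a := by field_simp
      nlinarith [mul_le_mul_of_nonneg_left h1 hδ.le]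
    have hc : 0 ≤ C * b^2 := by positivity
    calc b * |a-1| = b*(a-1) := by rw [habs]
      _ ≤ M * a := by nlinarith
      _ ≤ δ * (a * Real.log a - a + 1) := h2
      _ ≤ _ := by linarith

lemma clamp_close {M v x : ℝ} (hv : |v| ≤ M) : |v - max (-M) (min M x)| ≤ |v - x| := by
  have hv' := abs_le.mp hv
  have hM0 : 0 ≤ M := le_trans (abs_nonneg v) hv
  rcases le_total x (-M) with h1 | h1
  · have hmin : min M x = x := min_eq_right (by linarith)
    rw [hmin, max_eq_left (by linarith)]
    rw [abs_of_nonneg (by linarith : 0 ≤ v - -M), abs_of_nonneg (by linarith)]; linarith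
  · rcases le_total M x with h2 | h2
    · have hmin : min M x = M := min_eq_left h2
      rw [hmin, max_eq_right (by linarith)]
      rw [abs_of_nonpos (by linarith : v - M ≤ 0), abs_of_nonpos (by linarith)]; linarith
    · have hmin : min M x = x := min_eq_right h2
      rw [hmin, max_eq_right (by linarith)]

lemma abs_sub_le_abs_add_abs (x y : ℝ) : |x - y| ≤ |x| + |y| := by
  calc |x - y| = |x + -y| := by rw [sub_eq_add_neg]
    _ ≤ |x| + |-y| := abs_add_le _ _
    _ = |x| + |y| := by rw [abs_neg]

/-- master pointwise inequality -/
lemma master_pointwise {δ δ' M a H q : ℝ} (hδ : 0 < δ) (hδ' : 0 < δ') (hM : 1 ≤ M)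
    (ha : 0 ≤ a) (hq : |q| ≤ M) :
    |H - q| * |a - 1| ≤ (1/δ' + δ) * (a * Real.log a - a + 1)
      + ((if M < |H| then (1/δ') * (Real.exp (δ' * |H|) - 1) + H^2 else 0)
        + (Real.exp ((2*M/δ + 1)/2) + 1)^2/(4*δ) * ((if M < |H| then 0 else H) - q)^2) := by
  have hL0 : 0 ≤ a * Real.log a - a + 1 := ell_nonneg ha
  have h2M : (0:ℝ) ≤ 2*M := by linarith
  have hqM : |q| ≤ 2*M := by linarith
  by_cases hb : M < |H|
  · simp only [if_pos hb, zero_sub, neg_sq]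
    have f1 : |H - q| * |a - 1| ≤ |H| * |a - 1| + |q| * |a - 1| := by
      have := abs_sub_le_abs_add_abs H q
      nlinarith [abs_nonneg (a - 1)]
    have f2 : |a - 1| ≤ a + 1 := abs_le.mpr ⟨by linarith, by linarith⟩
    have f2' : |H| * |a - 1| ≤ |H| * a + |H| := by nlinarith [abs_nonneg H]
    have f3 : |H| * a ≤ ((a * Real.log a - a + 1) + (Real.exp (δ' * |H|) - 1))/δ' := by
      rw [le_div_iff₀ hδ']
      nlinarith [young_ineq (a := a) (b := δ' * |H|) ha]
    have f3' : ((a * Real.log a - a + 1) + (Real.exp (δ' * |H|) - 1))/δ'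
        = (1/δ') * (a * Real.log a - a + 1) + (1/δ') * (Real.exp (δ' * |H|) - 1) := by
      ring
    have f4 : |H| ≤ H^2 := by nlinarith [sq_abs H, hb, hM]
    have f5 := key_pointwise hδ h2M ha (abs_nonneg q) hqM
    rw [sq_abs] at f5
    linarith [f5, f3' ▸ f3]
  · simp only [if_neg hb]
    push_neg at hb
    have hw : |H - q| ≤ 2*M := le_trans (abs_sub_le_abs_add_abs H q) (by linarith)
    have hkey := key_pointwise hδ h2M ha (abs_nonneg (H - q)) hw
    rw [sq_abs] at hkey
    have : 0 ≤ (1/δ') * (a * Real.log a - a + 1) := by positivity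
    linarith [hkey]

open MeasureTheory Set Filter Topology

lemma lint_snd {Z : Type*} [MeasurableSpace Z] (ν : Measure Z) [SigmaFinite ν]
    (T : ℝ) (hT : 0 ≤ T) (g : Z → ENNReal) (hg : Measurable g) :
    ∫⁻ p : ℝ × Z, g p.2 ∂((volume.restrict (Icc (0:ℝ) T)).prod ν)
      = ENNReal.ofReal T * ∫⁻ z, g z ∂ν := by
  rw [MeasureTheory.lintegral_prod (fun p => g p.2)
    (Measurable.aemeasurable (by exact hg.comp measurable_snd))]
  simp only []
  rw [lintegral_const]
  rw [Measure.restrict_apply_univ, Real.volume_Icc, sub_zero, mul_comm]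

lemma ofReal_sq_eq (x : ℝ) : ENNReal.ofReal (x^2) = (‖x‖₊ : ENNReal)^(2:ℕ) := by
  rw [← sq_abs x, ENNReal.ofReal_pow (abs_nonneg x), ← enorm_eq_nnnorm, Real.enorm_eq_ofReal_abs]

lemma memLp_two_of_sq {Z : Type*} [MeasurableSpace Z] {ν : Measure Z} {f : Z → ℝ}
    (hf : Measurable f) (h2 : ∫⁻ z, ENNReal.ofReal (f z ^ 2) ∂ν < ⊤) :
    MemLp f 2 ν := by
  refine ⟨hf.aestronglyMeasurable, ?_⟩
  rw [eLpNorm_eq_lintegral_rpow_enorm_toReal (by norm_num) (by norm_num)]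
  refine ENNReal.rpow_lt_top_of_nonneg (by norm_num) ?_
  have : ∫⁻ z, (‖f z‖₊ : ENNReal) ^ (2:ENNReal).toReal ∂ν = ∫⁻ z, ENNReal.ofReal (f z ^ 2) ∂ν := by
    refine lintegral_congr fun z => ?_
    rw [ofReal_sq_eq]
    norm_num
  erw [this]
  exact h2.ne

lemma lint_sq_le_of_eLpNorm {Z : Type*} [MeasurableSpace Z] {ν : Measure Z} {f : Z → ℝ}
    {η : ℝ} (hη : 0 ≤ η) (hle : eLpNorm f 2 ν ≤ ENNReal.ofReal η) :
    ∫⁻ z, ENNReal.ofReal (f z ^ 2) ∂ν ≤ ENNReal.ofReal (η^2) := by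
  rw [eLpNorm_eq_lintegral_rpow_enorm_toReal (by norm_num) (by norm_num)] at hle
  have h2 := ENNReal.rpow_le_rpow hle (by norm_num : (0:ℝ) ≤ 2)
  rw [← ENNReal.rpow_mul] at h2
  norm_num at h2
  calc ∫⁻ z, ENNReal.ofReal (f z ^ 2) ∂ν
      = ∫⁻ z, (‖f z‖₊ : ENNReal) ^ (2:ENNReal).toReal ∂ν := by
        refine lintegral_congr fun z => ?_
        rw [ofReal_sq_eq]; norm_num
    _ ≤ ENNReal.ofReal (η^2) := by
        rw [ENNReal.ofReal_pow hη]
        convert h2 using 2 <;> norm_num <;> rfl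

set_option maxHeartbeats 1000000 in
lemma uniform_small
    {Z : Type*} [TopologicalSpace Z] [PolishSpace Z] [LocallyCompactSpace Z]
    [MeasurableSpace Z] [BorelSpace Z]
    (ν : Measure Z) [IsFiniteMeasureOnCompacts ν] [SigmaFinite ν]
    (T : ℝ) (hT : 0 < T) (N : ℝ) (hN : 0 < N)
    (h : Z → ℝ) (hhmeas : Measurable h)
    (hhL2 : ∫⁻ z, ENNReal.ofReal (h z ^ 2) ∂ν < ⊤)
    (hhexp : ∀ δ : ℝ, 0 < δ → ∀ E : Set Z, MeasurableSet E → ν E < ⊤ →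
        ∫⁻ z in E, ENNReal.ofReal (Real.exp (δ * |h z|)) ∂ν < ⊤)
    (ε : ℝ) (hε : 0 < ε) :
    ∃ ψ : Z → ℝ, Continuous ψ ∧ HasCompactSupport ψ ∧
      ∀ a : ℝ × Z → ℝ, Measurable a → (∀ p, 0 ≤ a p) →
        (∫⁻ p, ENNReal.ofReal (a p * Real.log (a p) - a p + 1)
            ∂((volume.restrict (Icc (0:ℝ) T)).prod ν) ≤ ENNReal.ofReal N) →
        ∫⁻ p, ENNReal.ofReal (|h p.2 - ψ p.2| * |a p - 1|)
            ∂((volume.restrict (Icc (0:ℝ) T)).prod ν) ≤ ENNReal.ofReal ε := by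
  letI := TopologicalSpace.upgradeIsCompletelyMetrizable Z
  haveI : ν.Regular := by infer_instance
  set μ := (volume.restrict (Icc (0:ℝ) T)).prod ν with hμ
  set δ' : ℝ := 4*N/ε with hδ'def
  have hδ' : 0 < δ' := by positivity
  set δ : ℝ := ε/(4*N) with hδdef
  have hδ : 0 < δ := by positivity
  -- tail sets
  set Eset : Set Z := {z | 1 < |h z|} with hEdef
  have hEmeas : MeasurableSet Eset := measurableSet_lt measurable_const hhmeas.abs
  have hEfin : ν Eset < ⊤ := by
    have hle : ν Eset = ∫⁻ z in Eset, 1 ∂ν := (setLIntegral_one _).symm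
    have h1 : ∫⁻ z in Eset, 1 ∂ν ≤ ∫⁻ z in Eset, ENNReal.ofReal (h z ^2) ∂ν := by
      refine setLIntegral_mono (hhmeas.pow_const 2).ennreal_ofReal fun z hz => ?_
      have : (1:ℝ) ≤ h z ^ 2 := by
        have : 1 < |h z| := hz
        nlinarith [sq_abs (h z)]
      simpa using ENNReal.one_le_ofReal.mpr this
    calc ν Eset = ∫⁻ z in Eset, 1 ∂ν := hle
      _ ≤ ∫⁻ z in Eset, ENNReal.ofReal (h z ^2) ∂ν := h1
      _ ≤ ∫⁻ z, ENNReal.ofReal (h z ^2) ∂ν := setLIntegral_le_lintegral _ _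
      _ < ⊤ := hhL2
  have hexpfin := hhexp δ' hδ' Eset hEmeas hEfin
  -- dominated convergence for tails
  set Fm : ℕ → Z → ENNReal := fun m z =>
    if ((m:ℝ)+1) < |h z| then
      ENNReal.ofReal (Real.exp (δ' * |h z|) - 1) + ENNReal.ofReal ((h z)^2) else 0 with hFmdef
  have hFmmeas : ∀ m, Measurable (Fm m) := by
    intro m
    exact Measurable.ite (measurableSet_lt measurable_const hhmeas.abs)
      (((hhmeas.abs.const_mul δ').exp.sub measurable_const).ennreal_ofReal.add
        (hhmeas.pow_const 2).ennreal_ofReal) measurable_const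
  set bound : Z → ENNReal := fun z =>
    Eset.indicator (fun z => ENNReal.ofReal (Real.exp (δ' * |h z|))) z
      + ENNReal.ofReal (h z ^2) with hbounddef
  have hFmle : ∀ m, Fm m ≤ bound := by
    intro m z
    simp only [hFmdef, hbounddef]
    by_cases hc : ((m:ℝ)+1) < |h z|
    · rw [if_pos hc]
      have hzE : z ∈ Eset := by
        simp only [hEdef, mem_setOf_eq]
        have h1m : (1:ℝ) ≤ (m:ℝ)+1 := by
          have := Nat.cast_nonneg (α := ℝ) m; linarith
        linarith
      rw [indicator_of_mem hzE]
      exact add_le_add (ENNReal.ofReal_le_ofReal (by linarith [Real.exp_pos (δ' * |h z|)])) le_rfl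
    · rw [if_neg hc]; exact zero_le
  have hboundfin : ∫⁻ z, bound z ∂ν < ⊤ := by
    rw [hbounddef]
    simp only []
    rw [lintegral_add_right _ (hhmeas.pow_const 2).ennreal_ofReal]
    refine ENNReal.add_lt_top.mpr ⟨?_, hhL2⟩
    rw [lintegral_indicator hEmeas]
    exact hexpfin
  have htendpt : ∀ z, Tendsto (fun m => Fm m z) atTop (𝓝 0) := by
    intro z
    refine tendsto_const_nhds.congr' ?_
    filter_upwards [eventually_ge_atTop ⌈|h z|⌉₊] with m hm
    have : ¬ ((m:ℝ)+1 < |h z|) := by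
      push_neg
      have : |h z| ≤ (m:ℝ) := by exact_mod_cast Nat.ceil_le.mp hm
      linarith
    simp only [hFmdef, if_neg this]
  have htend : Tendsto (fun m => ∫⁻ z, Fm m z ∂ν) atTop (𝓝 0) := by
    have h0 : (0:ENNReal) = ∫⁻ (_ : Z), 0 ∂ν := by simp
    rw [h0]
    exact tendsto_lintegral_of_dominated_convergence bound hFmmeas
      (fun m => Filter.Eventually.of_forall (hFmle m)) hboundfin.ne
      (Filter.Eventually.of_forall htendpt)
  set c₂ : ℝ := 1/δ' + 1 with hc₂def
  have hc₂ : 0 < c₂ := by positivity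
  set tgt₁ : ℝ := ε/(4 * T * c₂) with htgt₁def
  have htgt₁ : 0 < tgt₁ := by positivity
  obtain ⟨m₁, hm₁⟩ := (htend.eventually_lt_const (ENNReal.ofReal_pos.mpr htgt₁)).exists
  set M : ℝ := (m₁:ℝ) + 1 with hMdef
  have hM1 : 1 ≤ M := by
    simp only [hMdef]
    have := Nat.cast_nonneg (α := ℝ) m₁; linarith
  set C : ℝ := (Real.exp ((2*M/δ + 1)/2) + 1)^2/(4*δ) with hCdef
  have hC0 : 0 < C := by rw [hCdef]; positivity
  -- truncated h
  set g0 : Z → ℝ := fun z => if M < |h z| then 0 else h z with hg0def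
  have hg0meas : Measurable g0 :=
    Measurable.ite (measurableSet_lt measurable_const hhmeas.abs) measurable_const hhmeas
  have hg0sq : ∀ z, g0 z ^ 2 ≤ h z ^ 2 := by
    intro z
    simp only [hg0def]
    by_cases hc : M < |h z|
    · rw [if_pos hc]; simpa using sq_nonneg (h z)
    · rw [if_neg hc]
  have hg0mem : MemLp g0 2 ν := by
    refine memLp_two_of_sq hg0meas (lt_of_le_of_lt ?_ hhL2)
    exact lintegral_mono fun z => ENNReal.ofReal_le_ofReal (hg0sq z)
  set η : ℝ := Real.sqrt (ε/(4 * T * (C+1))) with hηdef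
  have hη : 0 < η := Real.sqrt_pos.mpr (by positivity)
  obtain ⟨ψ₀, hψ₀supp, hψ₀close, hψ₀cont, _⟩ :=
    hg0mem.exists_hasCompactSupport_eLpNorm_sub_le (p := 2) (by norm_num)
      (ε := ENNReal.ofReal η) (by simp [ENNReal.ofReal_pos.mpr hη, ne_of_gt])
  set ψ : Z → ℝ := fun z => max (-M) (min M (ψ₀ z)) with hψdef
  have hψcont : Continuous ψ := by
    exact continuous_const.max (continuous_const.min hψ₀cont)
  have hψsupp : HasCompactSupport ψ := by
    have : ψ = (fun x => max (-M) (min M x)) ∘ ψ₀ := rfl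
    rw [this]
    refine HasCompactSupport.comp_left hψ₀supp ?_
    rw [min_eq_right (by linarith : (0:ℝ) ≤ M), max_eq_right (by linarith : -M ≤ (0:ℝ))]
  have hψbdd : ∀ z, |ψ z| ≤ M := by
    intro z
    rw [abs_le]
    constructor
    · exact le_max_left _ _
    · exact max_le (by linarith) (min_le_left _ _)
  have hg0bdd : ∀ z, |g0 z| ≤ M := by
    intro z
    simp only [hg0def]
    by_cases hc : M < |h z|
    · rw [if_pos hc]; simpa using (by linarith : (0:ℝ) ≤ M)
    · rw [if_neg hc]; linarith [not_lt.mp hc]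
  have hw2 : ∫⁻ z, ENNReal.ofReal ((g0 z - ψ z)^2) ∂ν ≤ ENNReal.ofReal (ε/(4 * T * (C+1))) := by
    have hstep : ∀ z, (g0 z - ψ z)^2 ≤ (g0 z - ψ₀ z)^2 := by
      intro z
      have h1 : |g0 z - ψ z| ≤ |g0 z - ψ₀ z| := clamp_close (hg0bdd z)
      calc (g0 z - ψ z)^2 = |g0 z - ψ z|^2 := (sq_abs _).symm
        _ ≤ |g0 z - ψ₀ z|^2 := by nlinarith [abs_nonneg (g0 z - ψ z)]
        _ = (g0 z - ψ₀ z)^2 := sq_abs _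
    calc ∫⁻ z, ENNReal.ofReal ((g0 z - ψ z)^2) ∂ν
        ≤ ∫⁻ z, ENNReal.ofReal ((g0 z - ψ₀ z)^2) ∂ν :=
          lintegral_mono fun z => ENNReal.ofReal_le_ofReal (hstep z)
      _ = ∫⁻ z, ENNReal.ofReal (((g0 - ψ₀) z)^2) ∂ν := by rfl
      _ ≤ ENNReal.ofReal (η^2) := lint_sq_le_of_eLpNorm hη.le hψ₀close
      _ = ENNReal.ofReal (ε/(4 * T * (C+1))) := by
          rw [hηdef, Real.sq_sqrt (by positivity)]
  refine ⟨ψ, hψcont, hψsupp, ?_⟩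
  intro a ameas anneg haent
  set L : (ℝ × Z) → ℝ := fun p => a p * Real.log (a p) - a p + 1 with hLdef
  have hLmeas : Measurable L :=
    ((ameas.mul ((Real.measurable_log).comp ameas)).sub ameas).add_const 1
  set B : Z → ℝ := fun z =>
    (if M < |h z| then (1/δ') * (Real.exp (δ' * |h z|) - 1) + (h z)^2 else 0)
      + C * ((g0 z) - ψ z)^2 with hBdef
  have hBmeas : Measurable B := by
    refine Measurable.add ?_ ?_
    · exact Measurable.ite (measurableSet_lt measurable_const hhmeas.abs)
        ((((hhmeas.abs.const_mul δ').exp.sub measurable_const).const_mul (1/δ')).add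
          (hhmeas.pow_const 2)) measurable_const
    · exact ((hg0meas.sub (hψcont.measurable)).pow_const 2).const_mul C
  have hmaster : ∀ p : ℝ × Z, |h p.2 - ψ p.2| * |a p - 1| ≤ (1/δ' + δ) * L p + B p.2 := by
    intro p
    have := master_pointwise (δ := δ) (δ' := δ') (M := M) (a := a p) (H := h p.2)
      (q := ψ p.2) hδ hδ' hM1 (anneg p) (hψbdd p.2)
    simp only [hLdef, hBdef, hg0def, hCdef]
    convert this using 3
  have hA_est : ∫⁻ p, ENNReal.ofReal ((1/δ' + δ) * L p) ∂μ ≤ ENNReal.ofReal (ε/2) := by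
    have hcongr : ∀ p : ℝ × Z, ENNReal.ofReal ((1/δ' + δ) * L p)
        = ENNReal.ofReal (1/δ' + δ) * ENNReal.ofReal (L p) :=
      fun p => ENNReal.ofReal_mul (by positivity)
    rw [lintegral_congr hcongr, lintegral_const_mul _ hLmeas.ennreal_ofReal]
    calc ENNReal.ofReal (1/δ' + δ) * ∫⁻ p, ENNReal.ofReal (L p) ∂μ
        ≤ ENNReal.ofReal (1/δ' + δ) * ENNReal.ofReal N := mul_le_mul_right haent _
      _ = ENNReal.ofReal ((1/δ' + δ) * N) := (ENNReal.ofReal_mul (by positivity)).symm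
      _ = ENNReal.ofReal (ε/2) := by
          congr 1
          rw [hδ'def, hδdef]
          field_simp
          ring
  have htail_est : ∫⁻ z, ENNReal.ofReal
      (if M < |h z| then (1/δ') * (Real.exp (δ' * |h z|) - 1) + (h z)^2 else 0) ∂ν
      ≤ ENNReal.ofReal (ε/(4*T)) := by
    have hpt : ∀ z, ENNReal.ofReal
        (if M < |h z| then (1/δ') * (Real.exp (δ' * |h z|) - 1) + (h z)^2 else 0)
        ≤ ENNReal.ofReal c₂ * Fm m₁ z := by
      intro z
      by_cases hc : M < |h z|
      · have hc' : ((m₁:ℝ)+1) < |h z| := by rw [hMdef] at hc; exact hc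
        rw [if_pos hc]
        simp only [hFmdef, if_pos hc']
        have hexp1 : (0:ℝ) ≤ Real.exp (δ' * |h z|) - 1 := by
          have := Real.one_le_exp (by positivity : (0:ℝ) ≤ δ' * |h z|)
          linarith
        calc ENNReal.ofReal ((1/δ') * (Real.exp (δ' * |h z|) - 1) + (h z)^2)
            ≤ ENNReal.ofReal ((1/δ') * (Real.exp (δ' * |h z|) - 1))
              + ENNReal.ofReal ((h z)^2) := ENNReal.ofReal_add_le
          _ ≤ ENNReal.ofReal (c₂ * (Real.exp (δ' * |h z|) - 1))
              + ENNReal.ofReal (c₂ * (h z)^2) := by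
              refine add_le_add (ENNReal.ofReal_le_ofReal ?_) (ENNReal.ofReal_le_ofReal ?_)
              · apply mul_le_mul_of_nonneg_right _ hexp1
                rw [hc₂def]; linarith
              · have h0 : (0:ℝ) ≤ 1/δ' := by positivity
                rw [hc₂def]
                nlinarith [sq_nonneg (h z)]
          _ = ENNReal.ofReal c₂ * (ENNReal.ofReal (Real.exp (δ' * |h z|) - 1)
              + ENNReal.ofReal ((h z)^2)) := by
              rw [mul_add, ← ENNReal.ofReal_mul hc₂.le, ← ENNReal.ofReal_mul hc₂.le]
      · rw [if_neg hc]
        simp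
    calc ∫⁻ z, ENNReal.ofReal
          (if M < |h z| then (1/δ') * (Real.exp (δ' * |h z|) - 1) + (h z)^2 else 0) ∂ν
        ≤ ∫⁻ z, ENNReal.ofReal c₂ * Fm m₁ z ∂ν := lintegral_mono hpt
      _ = ENNReal.ofReal c₂ * ∫⁻ z, Fm m₁ z ∂ν := lintegral_const_mul _ (hFmmeas m₁)
      _ ≤ ENNReal.ofReal c₂ * ENNReal.ofReal tgt₁ := mul_le_mul_right hm₁.le _
      _ = ENNReal.ofReal (c₂ * tgt₁) := (ENNReal.ofReal_mul hc₂.le).symm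
      _ = ENNReal.ofReal (ε/(4*T)) := by
          congr 1
          rw [htgt₁def]
          field_simp
  have hCw_est : ∫⁻ z, ENNReal.ofReal (C * ((g0 z) - ψ z)^2) ∂ν
      ≤ ENNReal.ofReal (ε/(4*T)) := by
    have hcongr : ∀ z, ENNReal.ofReal (C * ((g0 z) - ψ z)^2)
        = ENNReal.ofReal C * ENNReal.ofReal (((g0 z) - ψ z)^2) :=
      fun z => ENNReal.ofReal_mul hC0.le
    rw [lintegral_congr hcongr,
      lintegral_const_mul (f := fun z => ENNReal.ofReal ((g0 z - ψ z)^2)) _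
        ((hg0meas.sub hψcont.measurable).pow_const 2).ennreal_ofReal]
    calc ENNReal.ofReal C * ∫⁻ z, ENNReal.ofReal (((g0 z) - ψ z)^2) ∂ν
        ≤ ENNReal.ofReal C * ENNReal.ofReal (ε/(4 * T * (C+1))) := mul_le_mul_right hw2 _
      _ = ENNReal.ofReal (C * (ε/(4 * T * (C+1)))) := (ENNReal.ofReal_mul hC0.le).symm
      _ ≤ ENNReal.ofReal (ε/(4*T)) := by
          apply ENNReal.ofReal_le_ofReal
          have heq : C * (ε/(4*T*(C+1))) = (C/(C+1)) * (ε/(4*T)) := by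
            field_simp
          have hfr : C/(C+1) ≤ 1 := by
            rw [div_le_one (by positivity)]; linarith
          calc C * (ε/(4*T*(C+1))) = (C/(C+1)) * (ε/(4*T)) := heq
            _ ≤ 1 * (ε/(4*T)) := mul_le_mul_of_nonneg_right hfr (by positivity)
            _ = ε/(4*T) := one_mul _
  have hB_est : ∫⁻ p : ℝ × Z, ENNReal.ofReal (B p.2) ∂μ ≤ ENNReal.ofReal (ε/2) := by
    rw [hμ, lint_snd ν T hT.le _ hBmeas.ennreal_ofReal]
    have hsplit : ∫⁻ z, ENNReal.ofReal (B z) ∂ν ≤ ENNReal.ofReal (ε/(2*T)) := by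
      calc ∫⁻ z, ENNReal.ofReal (B z) ∂ν
          ≤ ∫⁻ z, (ENNReal.ofReal
              (if M < |h z| then (1/δ') * (Real.exp (δ' * |h z|) - 1) + (h z)^2 else 0)
            + ENNReal.ofReal (C * ((g0 z) - ψ z)^2)) ∂ν := by
            refine lintegral_mono fun z => ?_
            simp only [hBdef]
            exact ENNReal.ofReal_add_le
        _ = (∫⁻ z, ENNReal.ofReal
              (if M < |h z| then (1/δ') * (Real.exp (δ' * |h z|) - 1) + (h z)^2 else 0) ∂ν)
            + ∫⁻ z, ENNReal.ofReal (C * ((g0 z) - ψ z)^2) ∂ν := by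
            refine lintegral_add_left ?_ _
            exact (Measurable.ite (measurableSet_lt measurable_const hhmeas.abs)
              ((((hhmeas.abs.const_mul δ').exp.sub measurable_const).const_mul (1/δ')).add
                (hhmeas.pow_const 2)) measurable_const).ennreal_ofReal
        _ ≤ ENNReal.ofReal (ε/(4*T)) + ENNReal.ofReal (ε/(4*T)) := add_le_add htail_est hCw_est
        _ = ENNReal.ofReal (ε/(2*T)) := by
            rw [← ENNReal.ofReal_add (by positivity) (by positivity)]
            congr 1
            field_simp
            ring
    calc ENNReal.ofReal T * ∫⁻ z, ENNReal.ofReal (B z) ∂ν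
        ≤ ENNReal.ofReal T * ENNReal.ofReal (ε/(2*T)) := mul_le_mul_right hsplit _
      _ = ENNReal.ofReal (T * (ε/(2*T))) := (ENNReal.ofReal_mul hT.le).symm
      _ = ENNReal.ofReal (ε/2) := by
          congr 1
          rw [← mul_div_assoc, mul_comm 2 T, mul_div_mul_left ε 2 hT.ne']
  calc ∫⁻ p, ENNReal.ofReal (|h p.2 - ψ p.2| * |a p - 1|) ∂μ
      ≤ ∫⁻ p, (ENNReal.ofReal ((1/δ' + δ) * L p) + ENNReal.ofReal (B p.2)) ∂μ := by
        refine lintegral_mono fun p => ?_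
        exact le_trans (ENNReal.ofReal_le_ofReal (hmaster p)) ENNReal.ofReal_add_le
    _ = (∫⁻ p, ENNReal.ofReal ((1/δ' + δ) * L p) ∂μ)
        + ∫⁻ p, ENNReal.ofReal (B p.2) ∂μ :=
        lintegral_add_left (hLmeas.const_mul _).ennreal_ofReal _
    _ ≤ ENNReal.ofReal (ε/2) + ENNReal.ofReal (ε/2) := add_le_add hA_est hB_est
    _ = ENNReal.ofReal ε := by
        rw [← ENNReal.ofReal_add (by positivity) (by positivity)]
        norm_num

lemma integrable_of_lint {α : Type*} [MeasurableSpace α] {μ : Measure α} {f : α → ℝ}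
    (hf : Measurable f) (hfin : ∫⁻ x, ENNReal.ofReal |f x| ∂μ < ⊤) : Integrable f μ := by
  refine ⟨hf.aestronglyMeasurable, ?_⟩
  rw [hasFiniteIntegral_iff_norm]
  calc ∫⁻ x, ENNReal.ofReal ‖f x‖ ∂μ = ∫⁻ x, ENNReal.ofReal |f x| ∂μ := by
        refine lintegral_congr fun x => by rw [Real.norm_eq_abs]
    _ < ⊤ := hfin

set_option maxHeartbeats 1000000 in
/-- If `φ_n, φ ∈ S^N` and `∫₀^T ∫_Z f φ_n dν ds → ∫₀^T ∫_Z f φ dν ds` for every continuous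
compactly supported `f`, then `∫₀^T ∫_Z h (φ_n − 1) dν ds → ∫₀^T ∫_Z h (φ − 1) dν ds`
for `h` square-integrable with exponential moments on finite-measure sets. -/
theorem stmt3
    {Z : Type*} [TopologicalSpace Z] [PolishSpace Z] [LocallyCompactSpace Z]
    [MeasurableSpace Z] [BorelSpace Z]
    (ν : Measure Z) [IsFiniteMeasureOnCompacts ν] [SigmaFinite ν]
    (T : ℝ) (hT : 0 < T)
    (ℓ : ℝ → ℝ) (hℓ : ∀ r : ℝ, 0 ≤ r → ℓ r = r * Real.log r - r + 1)
    (N : ℝ) (hN : 0 < N)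
    (h : Z → ℝ) (hhmeas : Measurable h)
    (hhL2 : ∫⁻ z, ENNReal.ofReal (h z ^ 2) ∂ν < ⊤)
    (hhexp : ∀ δ : ℝ, 0 < δ → ∀ E : Set Z, MeasurableSet E → ν E < ⊤ →
        ∫⁻ z in E, ENNReal.ofReal (Real.exp (δ * |h z|)) ∂ν < ⊤)
    (φn : ℕ → ℝ × Z → ℝ) (φ : ℝ × Z → ℝ)
    (hφn : ∀ n, Measurable (φn n) ∧ (∀ p, 0 ≤ φn n p) ∧
        ∫⁻ s in Icc (0 : ℝ) T, ∫⁻ z, ENNReal.ofReal (ℓ (φn n (s, z))) ∂ν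
          ≤ ENNReal.ofReal N)
    (hφ : Measurable φ ∧ (∀ p, 0 ≤ φ p) ∧
        ∫⁻ s in Icc (0 : ℝ) T, ∫⁻ z, ENNReal.ofReal (ℓ (φ (s, z))) ∂ν
          ≤ ENNReal.ofReal N)
    (hconv : ∀ f : ℝ × Z → ℝ, Continuous f → HasCompactSupport f →
        Tendsto (fun n => ∫ s in Icc (0 : ℝ) T, ∫ z, f (s, z) * φn n (s, z) ∂ν) atTop
          (𝓝 (∫ s in Icc (0 : ℝ) T, ∫ z, f (s, z) * φ (s, z) ∂ν))) :
    Tendsto (fun n => ∫ s in Icc (0 : ℝ) T, ∫ z, h z * (φn n (s, z) - 1) ∂ν) atTop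
      (𝓝 (∫ s in Icc (0 : ℝ) T, ∫ z, h z * (φ (s, z) - 1) ∂ν)) := by
  set μ := (volume.restrict (Icc (0:ℝ) T)).prod ν with hμdef
  -- entropy bound in product form
  have hent : ∀ a : ℝ × Z → ℝ, Measurable a → (∀ p, 0 ≤ a p) →
      (∫⁻ s in Icc (0 : ℝ) T, ∫⁻ z, ENNReal.ofReal (ℓ (a (s, z))) ∂ν ≤ ENNReal.ofReal N) →
      ∫⁻ p, ENNReal.ofReal (a p * Real.log (a p) - a p + 1) ∂μ ≤ ENNReal.ofReal N := by
    intro a ha hnn hbd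
    rw [hμdef, MeasureTheory.lintegral_prod (fun p => ENNReal.ofReal
        (a p * Real.log (a p) - a p + 1))
      (Measurable.aemeasurable (by
        exact (((ha.mul ((Real.measurable_log).comp ha)).sub ha).add_const 1).ennreal_ofReal))]
    calc ∫⁻ s in Icc (0:ℝ) T, ∫⁻ z, ENNReal.ofReal
          (a (s,z) * Real.log (a (s,z)) - a (s,z) + 1) ∂ν
        = ∫⁻ s in Icc (0:ℝ) T, ∫⁻ z, ENNReal.ofReal (ℓ (a (s, z))) ∂ν := by
          refine lintegral_congr fun s => lintegral_congr fun z => ?_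
          rw [hℓ _ (hnn (s, z))]
      _ ≤ ENNReal.ofReal N := hbd
  -- convergence criterion
  rw [Metric.tendsto_atTop]
  intro ε hε
  have hε4 : 0 < ε/4 := by linarith
  obtain ⟨ψ, hψcont, hψsupp, hψest⟩ :=
    uniform_small ν T hT N hN h hhmeas hhL2 hhexp (ε/4) hε4
  -- bound for ψ
  obtain ⟨Mψ0, hMψ0⟩ := hψsupp.exists_bound_of_continuous hψcont
  set Mb : ℝ := max Mψ0 0 with hMbdef
  have hMb0 : 0 ≤ Mb := le_max_right _ _
  have hMb : ∀ z, |ψ z| ≤ Mb := fun z =>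
    le_trans (by simpa [Real.norm_eq_abs] using hMψ0 z) (le_max_left _ _)
  have hKm : MeasurableSet (tsupport ψ) := (isClosed_tsupport ψ).measurableSet
  have hνK : ν (tsupport ψ) < ⊤ := hψsupp.measure_lt_top
  have hψmeas : Measurable ψ := hψcont.measurable
  -- finiteness of the ψ-weighted integral
  have hfinψ : ∀ a : ℝ × Z → ℝ, Measurable a → (∀ p, 0 ≤ a p) →
      (∫⁻ p, ENNReal.ofReal (a p * Real.log (a p) - a p + 1) ∂μ ≤ ENNReal.ofReal N) →
      ∫⁻ p, ENNReal.ofReal (|ψ p.2| * (a p + 1)) ∂μ < ⊤ := by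
    intro a ha hnn hentN
    have hpt : ∀ p : ℝ × Z, ENNReal.ofReal (|ψ p.2| * (a p + 1))
        ≤ ENNReal.ofReal (Mb * (a p * Real.log (a p) - a p + 1))
          + (tsupport ψ).indicator (fun _ => ENNReal.ofReal (Mb * Real.exp 1)) p.2 := by
      intro p
      have hL0 : 0 ≤ a p * Real.log (a p) - a p + 1 := ell_nonneg (hnn p)
      by_cases hz : p.2 ∈ tsupport ψ
      · rw [indicator_of_mem hz]
        have hplus : a p + 1 ≤ (a p * Real.log (a p) - a p + 1) + Real.exp 1 := by
          have h0 := young_ineq (a := a p) (b := 1) (hnn p)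
          rw [mul_one] at h0
          have h1 : Real.exp 1 - 1 + 1 = Real.exp 1 := by ring
          linarith
        have : |ψ p.2| * (a p + 1) ≤ Mb * (a p * Real.log (a p) - a p + 1) + Mb * Real.exp 1 := by
          have h1 : |ψ p.2| * (a p + 1) ≤ Mb * (a p + 1) :=
            mul_le_mul_of_nonneg_right (hMb _) (by linarith [hnn p])
          nlinarith [hMb p.2, abs_nonneg (ψ p.2), hnn p]
        exact le_trans (ENNReal.ofReal_le_ofReal this) ENNReal.ofReal_add_le
      · rw [indicator_of_notMem hz, image_eq_zero_of_notMem_tsupport hz]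
        simp only [abs_zero, zero_mul, ENNReal.ofReal_zero, add_zero]
        exact zero_le
    have hm1 : Measurable fun p : ℝ × Z =>
        ENNReal.ofReal (Mb * (a p * Real.log (a p) - a p + 1)) :=
      ((((ha.mul ((Real.measurable_log).comp ha)).sub ha).add_const 1).const_mul
        Mb).ennreal_ofReal
    calc ∫⁻ p, ENNReal.ofReal (|ψ p.2| * (a p + 1)) ∂μ
        ≤ ∫⁻ p, (ENNReal.ofReal (Mb * (a p * Real.log (a p) - a p + 1))
            + (tsupport ψ).indicator (fun _ => ENNReal.ofReal (Mb * Real.exp 1)) p.2) ∂μ :=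
          lintegral_mono hpt
      _ = (∫⁻ p, ENNReal.ofReal (Mb * (a p * Real.log (a p) - a p + 1)) ∂μ)
          + ∫⁻ p : ℝ × Z,
              (tsupport ψ).indicator (fun _ => ENNReal.ofReal (Mb * Real.exp 1)) p.2 ∂μ :=
          lintegral_add_left hm1 _
      _ < ⊤ := by
          refine ENNReal.add_lt_top.mpr ⟨?_, ?_⟩
          · have hcong : ∀ p : ℝ × Z, ENNReal.ofReal (Mb * (a p * Real.log (a p) - a p + 1))
                = ENNReal.ofReal Mb * ENNReal.ofReal (a p * Real.log (a p) - a p + 1) :=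
              fun p => ENNReal.ofReal_mul hMb0
            rw [lintegral_congr hcong, lintegral_const_mul _
              (show Measurable fun p : ℝ × Z =>
                  ENNReal.ofReal (a p * Real.log (a p) - a p + 1) from
                (((ha.mul ((Real.measurable_log).comp ha)).sub ha).add_const 1).ennreal_ofReal)]
            exact lt_of_le_of_lt (mul_le_mul_right hentN _)
              (ENNReal.mul_lt_top ENNReal.ofReal_lt_top ENNReal.ofReal_lt_top)
          · rw [hμdef, lint_snd ν T hT.le _ (Measurable.indicator measurable_const hKm)]
            rw [lintegral_indicator hKm, setLIntegral_const]
            exact ENNReal.mul_lt_top ENNReal.ofReal_lt_top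
              (ENNReal.mul_lt_top ENNReal.ofReal_lt_top hνK)
  -- integrability statements
  have hIψ1 : ∀ a : ℝ × Z → ℝ, Measurable a → (∀ p, 0 ≤ a p) →
      (∫⁻ p, ENNReal.ofReal (a p * Real.log (a p) - a p + 1) ∂μ ≤ ENNReal.ofReal N) →
      Integrable (fun p : ℝ × Z => ψ p.2 * (a p - 1)) μ := by
    intro a ha hnn hentN
    refine integrable_of_lint ((hψmeas.comp measurable_snd).mul (ha.sub measurable_const)) ?_
    refine lt_of_le_of_lt (lintegral_mono fun p => ENNReal.ofReal_le_ofReal ?_) (hfinψ a ha hnn hentN)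
    rw [abs_mul]
    refine mul_le_mul_of_nonneg_left ?_ (abs_nonneg _)
    exact abs_le.mpr ⟨by linarith [hnn p], by linarith [hnn p]⟩
  have hIψ2 : ∀ a : ℝ × Z → ℝ, Measurable a → (∀ p, 0 ≤ a p) →
      (∫⁻ p, ENNReal.ofReal (a p * Real.log (a p) - a p + 1) ∂μ ≤ ENNReal.ofReal N) →
      Integrable (fun p : ℝ × Z => ψ p.2 * a p) μ := by
    intro a ha hnn hentN
    refine integrable_of_lint ((hψmeas.comp measurable_snd).mul ha) ?_
    refine lt_of_le_of_lt (lintegral_mono fun p => ENNReal.ofReal_le_ofReal ?_) (hfinψ a ha hnn hentN)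
    rw [abs_mul, abs_of_nonneg (hnn p)]
    exact mul_le_mul_of_nonneg_left (by linarith) (abs_nonneg _)
  have hIψ3 : Integrable (fun p : ℝ × Z => ψ p.2) μ := by
    refine integrable_of_lint (hψmeas.comp measurable_snd) ?_
    refine lt_of_le_of_lt (lintegral_mono fun p => ENNReal.ofReal_le_ofReal ?_)
      (hfinψ φ hφ.1 hφ.2.1 (hent φ hφ.1 hφ.2.1 hφ.2.2))
    nlinarith [abs_nonneg (ψ p.2), hφ.2.1 p]
  have hIh : ∀ a : ℝ × Z → ℝ, Measurable a → (∀ p, 0 ≤ a p) →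
      (∫⁻ p, ENNReal.ofReal (a p * Real.log (a p) - a p + 1) ∂μ ≤ ENNReal.ofReal N) →
      Integrable (fun p : ℝ × Z => h p.2 * (a p - 1)) μ := by
    intro a ha hnn hentN
    refine integrable_of_lint ((hhmeas.comp measurable_snd).mul (ha.sub measurable_const)) ?_
    have hpt : ∀ p : ℝ × Z, ENNReal.ofReal (|h p.2 * (a p - 1)|)
        ≤ ENNReal.ofReal (|h p.2 - ψ p.2| * |a p - 1|)
          + ENNReal.ofReal (|ψ p.2| * (a p + 1)) := by
      intro p
      refine le_trans (ENNReal.ofReal_le_ofReal ?_) ENNReal.ofReal_add_le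
      rw [abs_mul]
      have h1 : |h p.2| ≤ |h p.2 - ψ p.2| + |ψ p.2| := by
        have := abs_sub_le_abs_add_abs (h p.2 - ψ p.2) (-ψ p.2)
        have h2 : h p.2 - ψ p.2 - -ψ p.2 = h p.2 := by ring
        rw [h2, abs_neg] at this
        exact this
      have h3 : |a p - 1| ≤ a p + 1 := abs_le.mpr ⟨by linarith [hnn p], by linarith [hnn p]⟩
      nlinarith [abs_nonneg (a p - 1), abs_nonneg (ψ p.2), abs_nonneg (h p.2 - ψ p.2), hnn p]
    refine lt_of_le_of_lt (lintegral_mono hpt) ?_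
    rw [lintegral_add_left (show Measurable fun p : ℝ × Z =>
        ENNReal.ofReal (|h p.2 - ψ p.2| * |a p - 1|) from
      (((hhmeas.comp measurable_snd).sub (hψmeas.comp measurable_snd)).abs.mul
        (ha.sub measurable_const).abs).ennreal_ofReal)]
    exact ENNReal.add_lt_top.mpr
      ⟨lt_of_le_of_lt (hψest a ha hnn hentN) ENNReal.ofReal_lt_top, hfinψ a ha hnn hentN⟩
  -- the cutoff in time
  set χ : ℝ → ℝ := fun s => max 0 (min 1 (min (s+1) (T+1-s))) with hχdef
  have hχcont : Continuous χ := by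
    exact continuous_const.max (continuous_const.min
      ((continuous_id.add continuous_const).min
        ((continuous_const.sub continuous_id))))
  have hχ1 : ∀ s ∈ Icc (0:ℝ) T, χ s = 1 := by
    intro s hs
    obtain ⟨hs0, hsT⟩ := hs
    simp only [hχdef]
    rw [min_eq_left (le_min (by linarith) (by linarith)), max_eq_right zero_le_one]
  have hχ0 : ∀ s ∉ Icc (-1:ℝ) (T+1), χ s = 0 := by
    intro s hs
    simp only [mem_Icc, not_and_or, not_le] at hs
    simp only [hχdef]
    rcases hs with hs | hs
    · rw [max_eq_left]
      exact le_trans (min_le_right _ _) (le_trans (min_le_left _ _) (by linarith))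
    · rw [max_eq_left]
      exact le_trans (min_le_right _ _) (le_trans (min_le_right _ _) (by linarith))
  -- the test function
  set f : ℝ × Z → ℝ := fun p => χ p.1 * ψ p.2 with hfdef
  have hfcont : Continuous f := (hχcont.comp continuous_fst).mul (hψcont.comp continuous_snd)
  have hfsupp : HasCompactSupport f := by
    refine HasCompactSupport.intro ((isCompact_Icc (a := (-1:ℝ)) (b := T+1)).prod hψsupp) ?_
    intro p hp
    simp only [mem_prod, not_and_or] at hp
    rcases hp with hp | hp
    · simp only [hfdef, hχ0 p.1 hp, zero_mul]
    · simp only [hfdef, image_eq_zero_of_notMem_tsupport hp, mul_zero]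
  have hcv0 := hconv f hfcont hfsupp
  -- rewrite the tested integrals
  have hrw : ∀ a : ℝ × Z → ℝ, Measurable a → (∀ p, 0 ≤ a p) →
      (∫⁻ p, ENNReal.ofReal (a p * Real.log (a p) - a p + 1) ∂μ ≤ ENNReal.ofReal N) →
      (∫ s in Icc (0:ℝ) T, ∫ z, f (s, z) * a (s, z) ∂ν) = ∫ p, ψ p.2 * a p ∂μ := by
    intro a ha hnn hentN
    have step1 : (∫ s in Icc (0:ℝ) T, ∫ z, f (s, z) * a (s, z) ∂ν)
        = ∫ s in Icc (0:ℝ) T, ∫ z, ψ z * a (s, z) ∂ν := by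
      refine setIntegral_congr_fun measurableSet_Icc fun s hs => ?_
      simp only [hfdef, hχ1 s hs, one_mul]
    rw [step1, hμdef]
    exact (MeasureTheory.integral_prod _ (hμdef ▸ hIψ2 a ha hnn hentN)).symm
  have hent_n : ∀ n, ∫⁻ p, ENNReal.ofReal
      (φn n p * Real.log (φn n p) - φn n p + 1) ∂μ ≤ ENNReal.ofReal N :=
    fun n => hent (φn n) (hφn n).1 (hφn n).2.1 (hφn n).2.2
  have hent_φ : ∫⁻ p, ENNReal.ofReal (φ p * Real.log (φ p) - φ p + 1) ∂μ ≤ ENNReal.ofReal N :=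
    hent φ hφ.1 hφ.2.1 hφ.2.2
  have hcv1 : Tendsto (fun n => ∫ p, ψ p.2 * φn n p ∂μ) atTop (𝓝 (∫ p, ψ p.2 * φ p ∂μ)) := by
    have e1 : (fun n => ∫ p, ψ p.2 * φn n p ∂μ)
        = fun n => ∫ s in Icc (0:ℝ) T, ∫ z, f (s, z) * φn n (s, z) ∂ν := by
      funext n
      exact (hrw (φn n) (hφn n).1 (hφn n).2.1 (hent_n n)).symm
    rw [e1, ← hrw φ hφ.1 hφ.2.1 hent_φ]
    exact hcv0
  -- convergence of the ψ-weighted terms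
  have hcv2 : Tendsto (fun n => ∫ p, ψ p.2 * (φn n p - 1) ∂μ) atTop
      (𝓝 (∫ p, ψ p.2 * (φ p - 1) ∂μ)) := by
    have edif : ∀ a : ℝ × Z → ℝ, Measurable a → (∀ p, 0 ≤ a p) →
        (∫⁻ p, ENNReal.ofReal (a p * Real.log (a p) - a p + 1) ∂μ ≤ ENNReal.ofReal N) →
        ∫ p, ψ p.2 * (a p - 1) ∂μ = (∫ p, ψ p.2 * a p ∂μ) - ∫ p : ℝ × Z, ψ p.2 ∂μ := by
      intro a ha hnn hentN
      rw [← integral_sub (hIψ2 a ha hnn hentN) hIψ3]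
      refine integral_congr_ae (Filter.Eventually.of_forall fun p => ?_)
      ring
    have e1 : (fun n => ∫ p, ψ p.2 * (φn n p - 1) ∂μ)
        = fun n => (∫ p, ψ p.2 * φn n p ∂μ) - ∫ p : ℝ × Z, ψ p.2 ∂μ := by
      funext n
      exact edif (φn n) (hφn n).1 (hφn n).2.1 (hent_n n)
    rw [e1, edif φ hφ.1 hφ.2.1 hent_φ]
    exact hcv1.sub_const _
  -- distance bound between h-integrals and ψ-integrals
  have hdist : ∀ a : ℝ × Z → ℝ, Measurable a → (∀ p, 0 ≤ a p) →
      (∫⁻ p, ENNReal.ofReal (a p * Real.log (a p) - a p + 1) ∂μ ≤ ENNReal.ofReal N) →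
      |(∫ p, h p.2 * (a p - 1) ∂μ) - ∫ p, ψ p.2 * (a p - 1) ∂μ| ≤ ε/4 := by
    intro a ha hnn hentN
    rw [← integral_sub (hIh a ha hnn hentN) (hIψ1 a ha hnn hentN)]
    have e2 : ∀ p : ℝ × Z, h p.2 * (a p - 1) - ψ p.2 * (a p - 1)
        = (h p.2 - ψ p.2) * (a p - 1) := fun p => by ring
    rw [integral_congr_ae (Filter.Eventually.of_forall e2)]
    have hb := MeasureTheory.norm_integral_le_lintegral_norm
      (μ := μ) (fun p : ℝ × Z => (h p.2 - ψ p.2) * (a p - 1))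
    rw [Real.norm_eq_abs] at hb
    refine le_trans hb ?_
    have e3 : ∀ p : ℝ × Z, ENNReal.ofReal ‖(h p.2 - ψ p.2) * (a p - 1)‖
        = ENNReal.ofReal (|h p.2 - ψ p.2| * |a p - 1|) := fun p => by
      rw [Real.norm_eq_abs, abs_mul]
    rw [lintegral_congr e3]
    have := hψest a ha hnn hentN
    calc (∫⁻ p, ENNReal.ofReal (|h p.2 - ψ p.2| * |a p - 1|) ∂μ).toReal
        ≤ (ENNReal.ofReal (ε/4)).toReal := by
          refine ENNReal.toReal_mono ENNReal.ofReal_ne_top this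
      _ = ε/4 := ENNReal.toReal_ofReal hε4.le
  -- assemble
  rw [Metric.tendsto_atTop] at hcv2
  obtain ⟨n₀, hn₀⟩ := hcv2 (ε/4) hε4
  refine ⟨n₀, fun n hn => ?_⟩
  have eqn : (∫ s in Icc (0:ℝ) T, ∫ z, h z * (φn n (s, z) - 1) ∂ν)
      = ∫ p, h p.2 * (φn n p - 1) ∂μ := by
    rw [hμdef]
    exact (MeasureTheory.integral_prod _
      (hμdef ▸ hIh (φn n) (hφn n).1 (hφn n).2.1 (hent_n n))).symm
  have eqφ : (∫ s in Icc (0:ℝ) T, ∫ z, h z * (φ (s, z) - 1) ∂ν)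
      = ∫ p, h p.2 * (φ p - 1) ∂μ := by
    rw [hμdef]
    exact (MeasureTheory.integral_prod _ (hμdef ▸ hIh φ hφ.1 hφ.2.1 hent_φ)).symm
  rw [Real.dist_eq, eqn, eqφ]
  have d1 := hdist (φn n) (hφn n).1 (hφn n).2.1 (hent_n n)
  have d2 := hdist φ hφ.1 hφ.2.1 hent_φ
  have d3 := hn₀ n hn
  rw [Real.dist_eq] at d3
  set X := ∫ p, h p.2 * (φn n p - 1) ∂μ
  set Y := ∫ p, ψ p.2 * (φn n p - 1) ∂μ
  set Y' := ∫ p, ψ p.2 * (φ p - 1) ∂μ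
  set X' := ∫ p, h p.2 * (φ p - 1) ∂μ
  have tri : |X - X'| ≤ |X - Y| + |Y - Y'| + |Y' - X'| := by
    calc |X - X'| = |(X - Y) + (Y - Y') + (Y' - X')| := by ring_nf
      _ ≤ |(X - Y) + (Y - Y')| + |Y' - X'| := abs_add_le _ _
      _ ≤ |X - Y| + |Y - Y'| + |Y' - X'| := by
          have := abs_add_le (X - Y) (Y - Y')
          linarith
  have d2' : |Y' - X'| ≤ ε/4 := by
    rw [abs_sub_comm]
    exact d2
  linarith [tri, d1, d3, d2']
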